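/- arXiv:1904.08285 — 4 statements merged into one kernel-verified Lean document; each statement's English description precedes it below -/
import Mathlib

section
/- Let 𝓑 be the 3×3 real matrix with rows (1, β, β^2), (1, Re α, Re α^2), (0, Im α, Im α^2), and let 𝓑* be (2/√23) times the matrix with rows (Im(α)β^{-1}, Im(α)β, Im(α)), (2Im(α)β^2, −Im(α)β, −Im(α)), (β, −1 + (3/2)β^2, −(3/2)β). Then 𝓑* is the dual basis matrix of 𝓑, i.e., 𝓑 (𝓑*)^T is the 3×3 identity matrix. -/
set_option maxHeartbeats 1000000


/-- With `𝓑` the Minkowski basis matrix and `𝓑*` the stated matrix, `𝓑*` is the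
dual basis matrix: `𝓑 (𝓑*)ᵀ = 1`. -/
theorem dual_basis_matrix (β : ℝ) (hβ : β ^ 3 = β + 1) (hβ1 : 1 < β) (hβ2 : β < 2)
    (α : ℂ) (hα : α ^ 3 = α + 1) (hαim : 0 < α.im) :
    (!![1, β, β ^ 2;
        1, α.re, (α ^ 2).re;
        0, α.im, (α ^ 2).im] : Matrix (Fin 3) (Fin 3) ℝ) *
      Matrix.transpose
        ((2 / Real.sqrt 23) •
          (!![α.im * β⁻¹, α.im * β, α.im;
              2 * α.im * β ^ 2, -(α.im * β), -α.im;
              β, -1 + (3 / 2) * β ^ 2, -((3 / 2) * β)] : Matrix (Fin 3) (Fin 3) ℝ))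
      = 1 := by
  set x := α.re with hx
  set y := α.im with hy
  have h1 := congrArg Complex.re hα
  have h2 := congrArg Complex.im hα
  simp [pow_succ, Complex.mul_re, Complex.mul_im, ← hx, ← hy] at h1 h2
  have hyne : y ≠ 0 := ne_of_gt hαim
  have hy2 : y^2 = 3*x^2 - 1 := by
    have : y * (3*x^2 - 1 - y^2) = 0 := by ring_nf; ring_nf at h2; linarith
    rcases mul_eq_zero.mp this with h | h
    · exact absurd h hyne
    · linarith
  have hx3 : 8*x^3 - 2*x + 1 = 0 := by nlinarith [h1, hy2]
  have hfac : (2*x + β) * (4*x^2 - 2*x*β + β^2 - 1) = 0 := by linarith [hx3]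
  have hb43 : 4/3 < β^2 := by nlinarith
  have hxval : x = -β/2 := by
    rcases mul_eq_zero.mp hfac with h | h
    · linarith
    · nlinarith [sq_nonneg (2*x - β/2)]
  have hy2' : y^2 = 3*β^2/4 - 1 := by rw [hy2, hxval]; ring
  set r := Real.sqrt 23 with hrdef
  have hr : r ^ 2 = 23 := Real.sq_sqrt (by norm_num)
  have hr0 : (0:ℝ) < r := Real.sqrt_pos.mpr (by norm_num)
  have hP : (0:ℝ) < -6*β^2 + 9*β + 4 := by nlinarith
  have hsq : (2 * r * y)^2 = (-6*β^2 + 9*β + 4)^2 := by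
    have h4 : (2 * r * y)^2 = 4 * 23 * y^2 := by
      rw [mul_pow, mul_pow, hr]; ring
    rw [h4, hy2']
    linear_combination (108 - 36*β)*hβ
  have hry : 2 * r * y = -6*β^2 + 9*β + 4 := by
    have hl : 0 < 2 * r * y := by positivity
    have hf : (2 * r * y - (-6*β^2 + 9*β + 4)) *
        (2 * r * y + (-6*β^2 + 9*β + 4)) = 0 := by
      linear_combination hsq
    rcases mul_eq_zero.mp hf with h | h
    · linarith
    · linarith
  have ha2re : (α^2).re = x^2 - y^2 := by
    simp [pow_two, Complex.mul_re, ← hx, ← hy]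
  have ha2im : (α^2).im = 2*x*y := by
    simp [pow_two, Complex.mul_im, ← hx, ← hy]; ring
  have hβ0 : β ≠ 0 := by positivity
  have hrne : r ≠ 0 := ne_of_gt hr0
  rw [ha2re, ha2im, hxval]
  clear_value x y r
  clear hx hy hrdef h1 h2 hα hsq hy2 hx3 hfac hxval ha2re ha2im hαim hyne
  ext i j
  fin_cases i <;> fin_cases j <;>
    simp [Matrix.mul_apply, Fin.sum_univ_succ, Matrix.transpose_apply, Matrix.smul_apply,
      Matrix.one_apply, Matrix.vecHead, Matrix.vecTail] <;>
    field_simp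
  · linear_combination (r*(1+2*β^3)/23)*hry - (2*y*(1+2*β^3)/23)*hr + (r*(-4+18*β-12*β^2)/23)*hβ
  · ring
  · ring
  · linear_combination (-4*β*y)*hy2' - 4*y*hβ
  · linear_combination 4*y*hy2' + (r*(12*β^2-4)/46)*hry - (y*(12*β^2-4)/23)*hr + (r*(108-72*β)/46)*hβ
  · linear_combination 12*β*hy2'
  · ring
  · ring
  · linear_combination (r*(6*β^2-2)/46)*hry - (y*(6*β^2-2)/23)*hr + (r*(54-36*β)/46)*hβ
end

section
/- One has 2 Im(α)/(β√23) = (5 − 6β + 4β^2)/23, equivalently 4 + 9β − 6β^2 = β(5 − 6β + 4β^2); consequently the Fourier module L^⊛ = (2Im(α)/(β√23)) · ℤ-span{1, β^2, β} equals ((5 − 6β + 4β^2)/23) · ℤ[β], where ℤ[β] is the ℤ-span of {1, β, β^2} in ℝ. -/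
/-- One has `2 Im(α)/(β√23) = (5 - 6β + 4β²)/23`, equivalently
`4 + 9β - 6β² = β(5 - 6β + 4β²)`; consequently the Fourier module
`L^⊛ = (2Im(α)/(β√23)) · ℤ⟨1, β², β⟩` equals `((5 - 6β + 4β²)/23) · ℤ[β]`. -/
theorem fourier_module (β : ℝ) (hβ : β ^ 3 = β + 1) (hβ1 : 1 < β) (hβ2 : β < 2)
    (α : ℂ) (hα : α ^ 3 = α + 1) (hαim : 0 < α.im) :
    2 * α.im / (β * Real.sqrt 23) = (5 - 6 * β + 4 * β ^ 2) / 23 ∧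
      4 + 9 * β - 6 * β ^ 2 = β * (5 - 6 * β + 4 * β ^ 2) ∧
      (fun x : ℝ => 2 * α.im / (β * Real.sqrt 23) * x) ''
          ((Submodule.span ℤ ({1, β ^ 2, β} : Set ℝ) : Submodule ℤ ℝ) : Set ℝ)
        = (fun x : ℝ => (5 - 6 * β + 4 * β ^ 2) / 23 * x) ''
          ((Submodule.span ℤ ({1, β, β ^ 2} : Set ℝ) : Submodule ℤ ℝ) : Set ℝ) := by
  have hβc : (β : ℂ) ^ 3 = (β : ℂ) + 1 := by exact_mod_cast hβ
  have hfac : (α - (β : ℂ)) * (α ^ 2 + β * α + (β ^ 2 - 1)) = 0 := by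
    linear_combination hα - hβc
  have hne : α - (β : ℂ) ≠ 0 := by
    intro h
    have : α.im = 0 := by
      have := congrArg Complex.im h
      simpa using this
    linarith
  have h2 : α ^ 2 + (β : ℂ) * α + ((β : ℂ) ^ 2 - 1) = 0 := by
    rcases mul_eq_zero.mp hfac with h | h
    · exact absurd h hne
    · exact h
  set a := α.re with ha
  set b := α.im with hb
  have him : 2 * a * b + β * b = 0 := by
    have := congrArg Complex.im h2
    simp [pow_two, Complex.mul_im, Complex.mul_re, Complex.add_im] at this
    linarith
  have hare : a = -β / 2 := by
    have hb0 : b ≠ 0 := ne_of_gt hαim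
    have : b * (2 * a + β) = 0 := by ring_nf; linarith [him]
    rcases mul_eq_zero.mp this with h | h
    · exact absurd h hb0
    · linarith
  have hre : a ^ 2 - b ^ 2 + β * a + (β ^ 2 - 1) = 0 := by
    have := congrArg Complex.re h2
    simp [pow_two, Complex.mul_re, Complex.add_re] at this
    ring_nf at this ⊢
    linarith
  have hbsq : (2 * b) ^ 2 = 3 * β ^ 2 - 4 := by
    rw [hare] at hre; nlinarith [hre]
  have hcpos : 0 < 4 + 9 * β - 6 * β ^ 2 := by nlinarith
  have hs : Real.sqrt 23 ^ 2 = 23 := Real.sq_sqrt (by norm_num)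
  have hspos : 0 < Real.sqrt 23 := Real.sqrt_pos.mpr (by norm_num)
  have hkey : 2 * b * Real.sqrt 23 = 4 + 9 * β - 6 * β ^ 2 := by
    have h1 : (2 * b * Real.sqrt 23) ^ 2 = (4 + 9 * β - 6 * β ^ 2) ^ 2 := by
      nlinarith [hbsq, hs, hβ]
    have h2' : (0:ℝ) ≤ 2 * b * Real.sqrt 23 := by positivity
    have h3 : (0:ℝ) ≤ 4 + 9 * β - 6 * β ^ 2 := le_of_lt hcpos
    nlinarith [h1, h2', h3]
  have part2 : 4 + 9 * β - 6 * β ^ 2 = β * (5 - 6 * β + 4 * β ^ 2) := by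
    linear_combination -4 * hβ
  have hβpos : (0:ℝ) < β := by linarith
  have part1 : 2 * b / (β * Real.sqrt 23) = (5 - 6 * β + 4 * β ^ 2) / 23 := by
    rw [div_eq_div_iff (by positivity) (by norm_num)]
    have : 2 * b * Real.sqrt 23 * Real.sqrt 23 =
        β * (5 - 6 * β + 4 * β ^ 2) * Real.sqrt 23 := by
      rw [hkey, part2]
    nlinarith [this, hs, hspos]
  refine ⟨part1, part2, ?_⟩
  have hsets : ({1, β ^ 2, β} : Set ℝ) = {1, β, β ^ 2} := by
    ext x; simp; tauto
  rw [part1, hsets]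
end

section
/- Suppose the nonempty compact sets W_a, W_b, W_c ⊂ ℂ ≅ ℝ² satisfy W_a = αW_c, W_b = αW_a ∪ (αW_c + 1), W_c = αW_b, and that αW_a ∩ (αW_c + 1) is Lebesgue-null. Let f_i(y) = ∫_{W_i} e^{2πi⟨x, y⟩} dx for i ∈ {a,b,c}, y ∈ ℝ². Then for all y ∈ ℝ²: f_a(y) = β^{-1} f_c(R y), f_b(y) = β^{-1} ( f_a(R y) + e^{2πi y₁} f_c(R y) ), and f_c(y) = β^{-1} f_b(R y); that is, (f_a, f_b, f_c)^T(y) = β^{-1} 𝖡(y) (f_a, f_b, f_c)^T(R y) with the Fourier matrix 𝖡(y) having rows (0, 0, 1), (1, 0, e^{2πi y₁}), (0, 1, 0). -/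
open MeasureTheory Matrix

private lemma normSq_root (β : ℝ) (hβ : β ^ 3 = β + 1) (hβ1 : 1 < β)
    (α : ℂ) (hα : α ^ 3 = α + 1) (hαim : 0 < α.im) :
    (Complex.normSq α : ℝ) = β⁻¹ := by
  have hβc : (β : ℂ) ^ 3 = (β : ℂ) + 1 := by exact_mod_cast congrArg Complex.ofReal hβ
  have h1 : (α - β) * (α ^ 2 + α * β + β ^ 2 - 1) = 0 := by linear_combination hα - hβc
  have hne : α - (β : ℂ) ≠ 0 := by
    intro h
    have : α = (β : ℂ) := sub_eq_zero.mp h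
    rw [this] at hαim; simp at hαim
  have h2 : α ^ 2 + α * β + β ^ 2 - 1 = 0 := by
    rcases mul_eq_zero.mp h1 with h | h
    · exact absurd h hne
    · exact h
  have hre := congrArg Complex.re h2
  have him := congrArg Complex.im h2
  simp [pow_two, Complex.mul_re, Complex.mul_im, Complex.add_re, Complex.add_im] at hre him
  have ha2 : α.re = -β / 2 := by
    have h0 : α.im * (α.re + α.re + β) = 0 := by linarith [him]
    have h3 : α.re + α.re + β = 0 := by
      rcases mul_eq_zero.mp h0 with h | h
      · exact absurd h (ne_of_gt hαim)
      · exact h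
    linarith
  have hβ0 : β ≠ 0 := by linarith
  have hns : Complex.normSq α = β ^ 2 - 1 := by
    rw [Complex.normSq_apply]; nlinarith [hre]
  rw [hns]
  field_simp
  nlinarith

private lemma image_setIntegral (α c : ℂ) (hα0 : α ≠ 0) (W : Set ℂ) (hW : MeasurableSet W)
    (g : ℂ → ℂ) :
    ∫ x in (fun z => α * z + c) '' W, g x
      = ((Complex.normSq α : ℝ) : ℂ) * ∫ x in W, g (α * x + c) := by
  set L : ℂ →L[ℝ] ℂ := (ContinuousLinearMap.mul ℂ ℂ α).restrictScalars ℝ with hL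
  have hdet : L.det = Complex.normSq α := by
    have : (L : ℂ →ₗ[ℝ] ℂ) = Algebra.lmul ℝ ℂ α := by
      ext z; simp [hL]
    rw [ContinuousLinearMap.det, this, ← Algebra.norm_apply, Algebra.norm_complex_apply]
  have hderiv : ∀ x ∈ W, HasFDerivWithinAt (fun z => α * z + c) L W x := by
    intro x _
    have h2 : HasFDerivAt (fun z => α * z + c) L x := by
      have h1 : HasFDerivAt (fun z : ℂ => L z + c) L x := (L.hasFDerivAt).add_const c
      have h0 : (fun z : ℂ => L z + c) = fun z => α * z + c := by
        funext z; simp [hL]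
      rwa [h0] at h1
    exact h2.hasFDerivWithinAt
  have hinj : Set.InjOn (fun z => α * z + c) W := by
    intro x _ y _ h
    simp only [add_left_inj] at h
    exact mul_left_cancel₀ hα0 h
  rw [integral_image_eq_integral_abs_det_fderiv_smul volume hW hderiv hinj g]
  simp only [hdet, abs_of_nonneg (Complex.normSq_nonneg α)]
  rw [show (fun x => Complex.normSq α • g (α * x + c))
      = fun x => ((Complex.normSq α : ℝ) : ℂ) * g (α * x + c)
      from funext fun x => Complex.real_smul, integral_const_mul]

private lemma image_setIntegral0 (α : ℂ) (hα0 : α ≠ 0) (W : Set ℂ) (hW : MeasurableSet W)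
    (g : ℂ → ℂ) :
    ∫ x in (fun z => α * z) '' W, g x
      = ((Complex.normSq α : ℝ) : ℂ) * ∫ x in W, g (α * x) := by
  simpa using image_setIntegral α 0 hα0 W hW g

/-- If the nonempty compact windows `W_a, W_b, W_c ⊆ ℂ` satisfy the IFS
`W_a = αW_c`, `W_b = αW_a ∪ (αW_c + 1)`, `W_c = αW_b`, with `αW_a ∩ (αW_c + 1)`
Lebesgue-null, then their inverse Fourier transforms
`f_i(y) = ∫_{W_i} e^{2πi⟨x,y⟩} dx` satisfy the recursion
`f_a(y) = β⁻¹ f_c(Ry)`, `f_b(y) = β⁻¹ (f_a(Ry) + e^{2πi y₁} f_c(Ry))`,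
`f_c(y) = β⁻¹ f_b(Ry)`, where `R = Qᵀ` and `Q` represents multiplication by `α`. -/
theorem window_fourier_recursion (β : ℝ) (hβ : β ^ 3 = β + 1) (hβ1 : 1 < β) (hβ2 : β < 2)
    (α : ℂ) (hα : α ^ 3 = α + 1) (hαim : 0 < α.im)
    (Wa Wb Wc : Set ℂ)
    (hWa : Wa.Nonempty) (hWa' : IsCompact Wa)
    (hWb : Wb.Nonempty) (hWb' : IsCompact Wb)
    (hWc : Wc.Nonempty) (hWc' : IsCompact Wc)
    (ha : Wa = (fun z => α * z) '' Wc)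
    (hb : Wb = (fun z => α * z) '' Wa ∪ (fun z => α * z + 1) '' Wc)
    (hc : Wc = (fun z => α * z) '' Wb)
    (hnull : volume ((fun z => α * z) '' Wa ∩ (fun z => α * z + 1) '' Wc) = 0)
    (y : Fin 2 → ℝ) :
    (∫ x in Wa, Complex.exp (2 * Real.pi * Complex.I * ((x.re * y 0 + x.im * y 1 : ℝ) : ℂ)))
        = ((β⁻¹ : ℝ) : ℂ) *
          (∫ x in Wc, Complex.exp (2 * Real.pi * Complex.I *
            ((x.re * ((!![α.re, α.im; -α.im, α.re] : Matrix (Fin 2) (Fin 2) ℝ).mulVec y) 0 +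
              x.im * ((!![α.re, α.im; -α.im, α.re] : Matrix (Fin 2) (Fin 2) ℝ).mulVec y) 1 : ℝ) : ℂ))) ∧
      (∫ x in Wb, Complex.exp (2 * Real.pi * Complex.I * ((x.re * y 0 + x.im * y 1 : ℝ) : ℂ)))
        = ((β⁻¹ : ℝ) : ℂ) *
          ((∫ x in Wa, Complex.exp (2 * Real.pi * Complex.I *
            ((x.re * ((!![α.re, α.im; -α.im, α.re] : Matrix (Fin 2) (Fin 2) ℝ).mulVec y) 0 +
              x.im * ((!![α.re, α.im; -α.im, α.re] : Matrix (Fin 2) (Fin 2) ℝ).mulVec y) 1 : ℝ) : ℂ)))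
          + Complex.exp (2 * Real.pi * Complex.I * ((y 0 : ℝ) : ℂ)) *
            (∫ x in Wc, Complex.exp (2 * Real.pi * Complex.I *
            ((x.re * ((!![α.re, α.im; -α.im, α.re] : Matrix (Fin 2) (Fin 2) ℝ).mulVec y) 0 +
              x.im * ((!![α.re, α.im; -α.im, α.re] : Matrix (Fin 2) (Fin 2) ℝ).mulVec y) 1 : ℝ) : ℂ)))) ∧
      (∫ x in Wc, Complex.exp (2 * Real.pi * Complex.I * ((x.re * y 0 + x.im * y 1 : ℝ) : ℂ)))
        = ((β⁻¹ : ℝ) : ℂ) *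
          (∫ x in Wb, Complex.exp (2 * Real.pi * Complex.I *
            ((x.re * ((!![α.re, α.im; -α.im, α.re] : Matrix (Fin 2) (Fin 2) ℝ).mulVec y) 0 +
              x.im * ((!![α.re, α.im; -α.im, α.re] : Matrix (Fin 2) (Fin 2) ℝ).mulVec y) 1 : ℝ) : ℂ))) := by
  have hα0 : α ≠ 0 := fun h => by simp [h] at hαim
  have hns : ((Complex.normSq α : ℝ) : ℂ) = ((β⁻¹ : ℝ) : ℂ) := by
    exact_mod_cast congrArg Complex.ofReal (normSq_root β hβ hβ1 α hα hαim)
  set R : Matrix (Fin 2) (Fin 2) ℝ := !![α.re, α.im; -α.im, α.re] with hR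
  set F : ℂ → ℂ := fun x =>
    Complex.exp (2 * Real.pi * Complex.I * ((x.re * y 0 + x.im * y 1 : ℝ) : ℂ)) with hF
  set G : ℂ → ℂ := fun x =>
    Complex.exp (2 * Real.pi * Complex.I *
      ((x.re * (R.mulVec y) 0 + x.im * (R.mulVec y) 1 : ℝ) : ℂ)) with hG
  have hFG : ∀ x : ℂ, F (α * x) = G x := by
    intro x
    simp only [hF, hG]
    congr 2
    push_cast
    simp [hR, Matrix.mulVec, dotProduct, Fin.sum_univ_two, Complex.mul_re, Complex.mul_im]
    ring
  have hFG1 : ∀ x : ℂ, F (α * x + 1)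
      = Complex.exp (2 * Real.pi * Complex.I * ((y 0 : ℝ) : ℂ)) * G x := by
    intro x
    rw [← hFG x, ← Complex.exp_add]
    simp only [hF]
    congr 1
    push_cast
    simp [Complex.add_re, Complex.add_im]
    ring
  have hcontF : Continuous F := by fun_prop
  have hMa : MeasurableSet Wa := hWa'.isClosed.measurableSet
  have hMb : MeasurableSet Wb := hWb'.isClosed.measurableSet
  have hMc : MeasurableSet Wc := hWc'.isClosed.measurableSet
  have hcm : Continuous (fun z : ℂ => α * z) := by fun_prop
  have hcm1 : Continuous (fun z : ℂ => α * z + 1) := by fun_prop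
  refine ⟨?_, ?_, ?_⟩
  · rw [ha, image_setIntegral0 α hα0 Wc hMc F, hns]
    congr 1
    exact integral_congr_ae (Filter.Eventually.of_forall fun x => hFG x)
  · rw [hb, integral_union_ae hnull
      ((hWc'.image hcm1).isClosed.measurableSet.nullMeasurableSet)
      ((hcontF.locallyIntegrable).integrableOn_isCompact (hWa'.image hcm))
      ((hcontF.locallyIntegrable).integrableOn_isCompact (hWc'.image hcm1)),
      image_setIntegral0 α hα0 Wa hMa F, image_setIntegral α 1 hα0 Wc hMc F, hns, ← mul_add]
    congr 1
    congr 1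
    · exact integral_congr_ae (Filter.Eventually.of_forall fun x => hFG x)
    · rw [show (∫ x in Wc, F (α * x + 1))
          = ∫ x in Wc, Complex.exp (2 * Real.pi * Complex.I * ((y 0 : ℝ) : ℂ)) * G x
          from integral_congr_ae (Filter.Eventually.of_forall fun x => hFG1 x),
        integral_const_mul]
  · rw [hc, image_setIntegral0 α hα0 Wb hMb F, hns]
    congr 1
    exact integral_congr_ae (Filter.Eventually.of_forall fun x => hFG x)
end

section
/- For every y ∈ ℝ², the limit C(y) = lim_{n→∞} β^{-n} 𝖡(y) 𝖡(R y) ⋯ 𝖡(R^{n-1} y) of the rescaled Fourier matrix cocycle exists (as a 3×3 complex matrix); the resulting matrix function C is continuous on ℝ², and C(0) = P, where P is the rank-one projector with entries P_{ij} = v_i u_j for v = (2 − β^2, β^2 − β, β − 1)^T and u = ((3 + β + 7β^2)/23)(1, β, β^2). -/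
open Matrix

noncomputable def fourierMatrix (y : Fin 2 → ℝ) : Matrix (Fin 3) (Fin 3) ℂ :=
  !![0, 0, 1;
     1, 0, Complex.exp (2 * Real.pi * Complex.I * (y 0 : ℂ));
     0, 1, 0]

noncomputable def internalMatrix (α : ℂ) : Matrix (Fin 2) (Fin 2) ℝ :=
  !![α.re, α.im;
     -α.im, α.re]

namespace CocycleAux

noncomputable def Mmat : Matrix (Fin 3) (Fin 3) ℂ := !![0,0,1;1,0,1;0,1,0]

noncomputable def Eunit : Matrix (Fin 3) (Fin 3) ℂ := !![0,0,0;0,0,1;0,0,0]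

noncomputable def Pa (x : ℂ) : Matrix (Fin 3) (Fin 3) ℂ :=
  Matrix.of fun i j => ![2 - x^2, x^2 - x, x - 1] i * ((3 + x + 7*x^2)/23 * ![1, x, x^2] j)

lemma Pa_sum (b a : ℂ) (hb : b^3 = b + 1) (h1 : a^2 + a*b + b^2 = 1) :
    Pa b + Pa a + Pa (-b-a) = 1 := by
  ext i j
  fin_cases i <;> fin_cases j <;>
    simp [Pa, Matrix.one_apply, Matrix.add_apply] <;> push_cast
  · linear_combination (((-3))/23) * hb + (((8)+(3*b)+(-14*b*b)+(-14*a*b)+(-14*a*a))/23) * h1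
  · linear_combination (((-2))/23) * hb + (((2)+(2*b)+(-2*b*b)+(-2*a*b)+(35*a*b*b)+(-2*a*a)+(35*a*a*b))/23) * h1
  · linear_combination (((-20)+(21*b)+(-21*b*b*b))/23) * hb + (((20)+(-1*b)+(-13*b*b)+(7*b*b*b*b)+(8*a*b)+(5*a*b*b)+(-49*a*b*b*b)+(8*a*a)+(5*a*a*b)+(-63*a*a*b*b)+(-28*a*a*a*b)+(-14*a*a*a*a))/23) * h1
  · linear_combination (((-18))/23) * hb + (((18)+(18*b)+(14*b*b)+(14*a*b)+(14*a*a))/23) * h1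
  · linear_combination (((41))/23) * hb + (((-18)+(-41*b)+(-12*b*b)+(-12*a*b)+(-35*a*b*b)+(-12*a*a)+(-35*a*a*b))/23) * h1
  · linear_combination (((-18)+(-21*b)+(21*b*b*b))/23) * hb + (((18)+(39*b)+(39*b*b)+(-7*b*b*b*b)+(18*a*b)+(30*a*b*b)+(49*a*b*b*b)+(18*a*a)+(30*a*a*b)+(63*a*a*b*b)+(28*a*a*a*b)+(14*a*a*a*a))/23) * h1
  · linear_combination (((21))/23) * hb + (((-12)+(-21*b))/23) * h1
  · linear_combination (((-18))/23) * hb + (((18)+(18*b)+(14*b*b)+(14*a*b)+(14*a*a))/23) * h1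
  · linear_combination (((41))/23) * hb + (((-18)+(-41*b)+(-12*b*b)+(-12*a*b)+(-35*a*b*b)+(-12*a*a)+(-35*a*a*b))/23) * h1

lemma M_mul_Pa (x : ℂ) (hx : x^3 = x + 1) : Mmat * Pa x = x • Pa x := by
  ext i j
  fin_cases i <;> fin_cases j <;>
    simp [Pa, Mmat, Matrix.mul_apply, Fin.sum_univ_three, Matrix.smul_apply, smul_eq_mul]
  · linear_combination ((3+x+7*x^2)/23) * hx
  · linear_combination ((3+x+7*x^2)/23 * x) * hx
  · linear_combination ((3+x+7*x^2)/23 * x^2) * hx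
  · linear_combination (-(3+x+7*x^2)/23) * hx
  · linear_combination (-(3+x+7*x^2)/23 * x) * hx
  · linear_combination (-(3+x+7*x^2)/23 * x^2) * hx
  · ring
  · ring
  · ring

lemma Mpow (b a : ℂ) (hb : b^3 = b + 1) (ha : a^3 = a + 1)
    (h3 : (-b-a)^3 = (-b-a) + 1) (h1 : a^2 + a*b + b^2 = 1) :
    ∀ n : ℕ, Mmat ^ n = b^n • Pa b + a^n • Pa a + (-b-a)^n • Pa (-b-a) := by
  intro n
  induction n with
  | zero => simpa using (Pa_sum b a hb h1).symm
  | succ n ih =>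
    rw [pow_succ', ih]
    rw [mul_add, mul_add, mul_smul_comm, mul_smul_comm, mul_smul_comm,
      M_mul_Pa b hb, M_mul_Pa a ha, M_mul_Pa _ h3,
      smul_smul, smul_smul, smul_smul, ← pow_succ, ← pow_succ, ← pow_succ]




noncomputable def N3 (A : Matrix (Fin 3) (Fin 3) ℂ) : ℝ :=
  ∑ i, ∑ j, ‖A i j‖

lemma N3_nonneg (A : Matrix (Fin 3) (Fin 3) ℂ) : 0 ≤ N3 A := by
  refine Finset.sum_nonneg fun i _ => Finset.sum_nonneg fun j _ => ?_
  exact norm_nonneg _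

lemma abs_le_N3 (A : Matrix (Fin 3) (Fin 3) ℂ) (i j : Fin 3) :
    ‖A i j‖ ≤ N3 A := by
  have h1 : ‖A i j‖ ≤ ∑ j', ‖A i j'‖ :=
    Finset.single_le_sum (f := fun j' => ‖A i j'‖)
      (fun j' _ => norm_nonneg _) (Finset.mem_univ j)
  have h2 : (∑ j', ‖A i j'‖) ≤ N3 A :=
    Finset.single_le_sum (f := fun i' => ∑ j', ‖A i' j'‖)
      (fun i' _ => Finset.sum_nonneg fun j' _ => norm_nonneg _) (Finset.mem_univ i)
  exact h1.trans h2

lemma N3_add_le (A B : Matrix (Fin 3) (Fin 3) ℂ) : N3 (A + B) ≤ N3 A + N3 B := by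
  rw [N3, N3, N3, ← Finset.sum_add_distrib]
  refine Finset.sum_le_sum fun i _ => ?_
  rw [← Finset.sum_add_distrib]
  exact Finset.sum_le_sum fun j _ => norm_add_le _ _

lemma N3_smul (c : ℂ) (A : Matrix (Fin 3) (Fin 3) ℂ) : N3 (c • A) = ‖c‖ * N3 A := by
  simp [N3, Finset.mul_sum, norm_mul]

lemma N3_mul_le (A B : Matrix (Fin 3) (Fin 3) ℂ) : N3 (A * B) ≤ N3 A * N3 B := by
  have h1 : N3 (A * B) ≤ ∑ i, ∑ j, ∑ k, ‖A i k‖ * ‖B k j‖ := by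
    refine Finset.sum_le_sum fun i _ => Finset.sum_le_sum fun j _ => ?_
    rw [Matrix.mul_apply]
    calc ‖∑ k, A i k * B k j‖ ≤ ∑ k, ‖A i k * B k j‖ :=
          norm_sum_le _ _
      _ = ∑ k, ‖A i k‖ * ‖B k j‖ := by
          simp [norm_mul]
  refine h1.trans ?_
  have hcol : ∀ k, (∑ i, ‖A i k‖) ≤ N3 A := by
    intro k
    refine Finset.sum_le_sum fun i _ => ?_
    exact Finset.single_le_sum (f := fun j' => ‖A i j'‖)
      (fun j' _ => norm_nonneg _) (Finset.mem_univ k)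
  have heq : ∑ i, ∑ j, ∑ k, ‖A i k‖ * ‖B k j‖
      = ∑ k, (∑ i, ‖A i k‖) * (∑ j, ‖B k j‖) := by
    calc ∑ i, ∑ j, ∑ k, ‖A i k‖ * ‖B k j‖
        = ∑ i, ∑ k, ∑ j, ‖A i k‖ * ‖B k j‖ :=
          Finset.sum_congr rfl fun i _ => Finset.sum_comm
      _ = ∑ k, ∑ i, ∑ j, ‖A i k‖ * ‖B k j‖ :=
          Finset.sum_comm
      _ = ∑ k, (∑ i, ‖A i k‖) * (∑ j, ‖B k j‖) :=
          Finset.sum_congr rfl fun k _ => (Finset.sum_mul_sum _ _ _ _).symm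
  rw [heq]
  calc ∑ k, (∑ i, ‖A i k‖) * (∑ j, ‖B k j‖)
      ≤ ∑ k, N3 A * (∑ j, ‖B k j‖) := by
        refine Finset.sum_le_sum fun k _ => ?_
        exact mul_le_mul_of_nonneg_right (hcol k)
          (Finset.sum_nonneg fun j _ => norm_nonneg _)
    _ = N3 A * N3 B := by rw [← Finset.mul_sum]; rfl

lemma N3_sum_le {s : Finset ℕ} (f : ℕ → Matrix (Fin 3) (Fin 3) ℂ) :
    N3 (∑ k ∈ s, f k) ≤ ∑ k ∈ s, N3 (f k) := by
  classical
  induction s using Finset.induction with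
  | empty => simp [N3]
  | insert _ _ hk ih =>
    rw [Finset.sum_insert hk, Finset.sum_insert hk]
    exact (N3_add_le _ _).trans (by linarith)

lemma tendsto_of_N3 {f : ℕ → Matrix (Fin 3) (Fin 3) ℂ} {L : Matrix (Fin 3) (Fin 3) ℂ}
    {g : ℕ → ℝ} (h : ∀ n, N3 (f n - L) ≤ g n)
    (hg : Filter.Tendsto g Filter.atTop (nhds 0)) :
    Filter.Tendsto f Filter.atTop (nhds L) := by
  have : ∀ i j, Filter.Tendsto (fun n => f n i j) Filter.atTop (nhds (L i j)) := by
    intro i j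
    rw [← tendsto_sub_nhds_zero_iff]
    refine squeeze_zero_norm (fun n => ?_) hg
    calc ‖f n i j - L i j‖ = ‖(f n - L) i j‖ := by simp [Matrix.sub_apply]
      _ ≤ N3 (f n - L) := abs_le_N3 _ _ _
      _ ≤ g n := h n
  rw [show (Filter.Tendsto f Filter.atTop (nhds L)) ↔ _ from tendsto_pi_nhds]
  intro i
  rw [show _ ↔ _ from tendsto_pi_nhds]
  intro j
  exact this i j

lemma exp_circle_bound (t : ℝ) :
    ‖Complex.exp (2 * Real.pi * Complex.I * t) - 1‖ ≤ 2 * Real.pi * |t| := by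
  have harg : 2 * Real.pi * Complex.I * (t:ℂ) = ((2 * Real.pi * t : ℝ) : ℂ) * Complex.I := by
    push_cast; ring
  rw [harg]
  set θ : ℝ := 2 * Real.pi * t with hθ
  have hsq : ‖Complex.exp ((θ:ℂ) * Complex.I) - 1‖ ^ 2 = 2 - 2 * Real.cos θ := by
    rw [← Complex.normSq_eq_norm_sq, Complex.normSq_apply]
    simp [Complex.exp_ofReal_mul_I_re, Complex.exp_ofReal_mul_I_im, Complex.sub_re,
      Complex.sub_im, Complex.one_re, Complex.one_im]
    nlinarith [Real.sin_sq_add_cos_sq θ]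
  have hb : 2 - 2 * Real.cos θ ≤ θ ^ 2 := by
    nlinarith [Real.one_sub_sq_div_two_le_cos (x := θ)]
  have h0 : ‖Complex.exp ((θ:ℂ) * Complex.I) - 1‖ ≤ |θ| := by
    have := norm_nonneg (Complex.exp ((θ:ℂ) * Complex.I) - 1)
    nlinarith [abs_nonneg θ, sq_abs θ]
  calc ‖Complex.exp ((θ:ℂ) * Complex.I) - 1‖ ≤ |θ| := h0
    _ ≤ 2 * Real.pi * |t| := by
      rw [hθ, abs_mul, abs_of_nonneg (by positivity : (0:ℝ) ≤ 2 * Real.pi)]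

lemma gronwall_prod (a : ℕ → ℝ) (ha : ∀ k, 0 ≤ a k) :
    ∀ n, ∏ k ∈ Finset.range n, (1 + a k) =
      1 + ∑ k ∈ Finset.range n, a k * ∏ j ∈ Finset.range k, (1 + a j) := by
  intro n
  induction n with
  | zero => simp
  | succ n ih =>
    rw [Finset.prod_range_succ, Finset.sum_range_succ, ih]; ring

lemma gronwall (K : ℝ) (hK : 0 ≤ K) (a g : ℕ → ℝ) (ha : ∀ k, 0 ≤ a k)
    (h : ∀ n, g n ≤ K + ∑ k ∈ Finset.range n, a k * g k) :
    ∀ n, g n ≤ K * ∏ k ∈ Finset.range n, (1 + a k) := by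
  intro n
  induction n using Nat.strong_induction_on with
  | _ n ih =>
    calc g n ≤ K + ∑ k ∈ Finset.range n, a k * g k := h n
      _ ≤ K + ∑ k ∈ Finset.range n, a k * (K * ∏ j ∈ Finset.range k, (1 + a j)) := by
          refine add_le_add_right (Finset.sum_le_sum fun k hk => ?_) K
          exact mul_le_mul_of_nonneg_left (ih k (Finset.mem_range.mp hk)) (ha k)
      _ = K * (1 + ∑ k ∈ Finset.range n, a k * ∏ j ∈ Finset.range k, (1 + a j)) := by
          rw [mul_add, mul_one, Finset.mul_sum]
          congr 1
          exact Finset.sum_congr rfl fun k _ => by ring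
      _ = K * ∏ k ∈ Finset.range n, (1 + a k) := by rw [gronwall_prod a ha]






lemma fourier_decomp (w : Fin 2 → ℝ) :
    fourierMatrix w = Mmat +
      (Complex.exp (2 * Real.pi * Complex.I * (w 0 : ℂ)) - 1) • Eunit := by
  ext i j
  fin_cases i <;> fin_cases j <;>
    simp [fourierMatrix, Mmat, Eunit, Matrix.add_apply, Matrix.smul_apply, smul_eq_mul,
      Matrix.vecHead, Matrix.vecTail]

lemma fourier_zero_eq : fourierMatrix 0 = Mmat := by
  ext i j
  fin_cases i <;> fin_cases j <;>
    simp [fourierMatrix, Mmat]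

lemma internalMatrix_mul (z w : ℂ) :
    internalMatrix z * internalMatrix w = internalMatrix (z * w) := by
  ext i j
  fin_cases i <;> fin_cases j <;>
    simp [internalMatrix, Matrix.mul_apply, Fin.sum_univ_two, Complex.mul_re, Complex.mul_im] <;>
    ring

lemma internalMatrix_one : internalMatrix 1 = 1 := by
  ext i j
  fin_cases i <;> fin_cases j <;> simp [internalMatrix, Matrix.one_apply]

lemma internalMatrix_pow (α : ℂ) (k : ℕ) :
    internalMatrix α ^ k = internalMatrix (α ^ k) := by
  induction k with
  | zero => simp [internalMatrix_one]
  | succ k ih => rw [pow_succ, ih, internalMatrix_mul, ← pow_succ]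

lemma mulVec_entry (z : ℂ) (y : Fin 2 → ℝ) :
    ((internalMatrix z).mulVec y) 0 = z.re * y 0 + z.im * y 1 := by
  simp [internalMatrix, Matrix.mulVec, dotProduct, Fin.sum_univ_two]

lemma mulVec_entry_bound (α : ℂ) (k : ℕ) (y : Fin 2 → ℝ) :
    |((internalMatrix α ^ k).mulVec y) 0| ≤ ‖α‖ ^ k * (|y 0| + |y 1|) := by
  rw [internalMatrix_pow, mulVec_entry]
  have h1 : |(α ^ k).re| ≤ ‖α‖ ^ k := by
    rw [← norm_pow]; exact Complex.abs_re_le_norm _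
  have h2 : |(α ^ k).im| ≤ ‖α‖ ^ k := by
    rw [← norm_pow]; exact Complex.abs_im_le_norm _
  calc |(α ^ k).re * y 0 + (α ^ k).im * y 1|
      ≤ |(α ^ k).re * y 0| + |(α ^ k).im * y 1| := abs_add_le _ _
    _ = |(α ^ k).re| * |y 0| + |(α ^ k).im| * |y 1| := by rw [abs_mul, abs_mul]
    _ ≤ ‖α‖ ^ k * |y 0| + ‖α‖ ^ k * |y 1| :=
        add_le_add (mul_le_mul_of_nonneg_right h1 (abs_nonneg _))
          (mul_le_mul_of_nonneg_right h2 (abs_nonneg _))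
    _ = ‖α‖ ^ k * (|y 0| + |y 1|) := by ring



noncomputable def Amat (β : ℝ) : Matrix (Fin 3) (Fin 3) ℂ := ((β:ℂ))⁻¹ • Mmat

noncomputable def Sfun (β : ℝ) (α : ℂ) (y : Fin 2 → ℝ) (n : ℕ) : Matrix (Fin 3) (Fin 3) ℂ :=
  ((β : ℂ) ^ n)⁻¹ •
    ((List.range n).map (fun i => fourierMatrix ((internalMatrix α ^ i).mulVec y))).prod

noncomputable def Ffun (β : ℝ) (α : ℂ) (y : Fin 2 → ℝ) (k : ℕ) : Matrix (Fin 3) (Fin 3) ℂ :=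
  ((β:ℂ))⁻¹ • (fourierMatrix ((internalMatrix α ^ k).mulVec y) - Mmat)

noncomputable def Tterm (β : ℝ) (α : ℂ) (y : Fin 2 → ℝ) (k : ℕ) : Matrix (Fin 3) (Fin 3) ℂ :=
  Sfun β α y k * Ffun β α y k * Pa (β:ℂ)

lemma Sfun_zero (β : ℝ) (α : ℂ) (y : Fin 2 → ℝ) : Sfun β α y 0 = 1 := by
  simp [Sfun]

lemma Sfun_succ (β : ℝ) (α : ℂ) (y : Fin 2 → ℝ) (n : ℕ) :
    Sfun β α y (n+1) = Sfun β α y n * (Amat β + Ffun β α y n) := by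
  have h1 : Amat β + Ffun β α y n
      = ((β:ℂ))⁻¹ • fourierMatrix ((internalMatrix α ^ n).mulVec y) := by
    rw [Amat, Ffun, smul_sub]
    abel
  rw [h1, Sfun, Sfun, List.range_succ, List.map_append, List.prod_append,
    List.map_singleton, List.prod_singleton, pow_succ, mul_inv,
    Matrix.smul_mul, Matrix.mul_smul, smul_smul]

lemma N3_Eunit : N3 Eunit = 1 := by
  simp [N3, Eunit, Fin.sum_univ_three, Matrix.vecHead, Matrix.vecTail]

lemma Ffun_bound (β : ℝ) (hβ0 : 0 < β) (α : ℂ) (y : Fin 2 → ℝ) (k : ℕ) :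
    N3 (Ffun β α y k) ≤ (2 * Real.pi / β) * ((|y 0| + |y 1|) * ‖α‖ ^ k) := by
  set t : ℝ := ((internalMatrix α ^ k).mulVec y) 0 with ht
  have hdec : fourierMatrix ((internalMatrix α ^ k).mulVec y) - Mmat
      = (Complex.exp (2 * Real.pi * Complex.I * (t:ℂ)) - 1) • Eunit := by
    rw [fourier_decomp ((internalMatrix α ^ k).mulVec y)]
    abel
  rw [Ffun, hdec, N3_smul, N3_smul, N3_Eunit, mul_one]
  have habs : ‖((β:ℂ))⁻¹‖ = β⁻¹ := by
    rw [norm_inv, Complex.norm_real, Real.norm_eq_abs, abs_of_pos hβ0]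
  rw [habs]
  have h1 : ‖Complex.exp (2 * Real.pi * Complex.I * (t:ℂ)) - 1‖
      ≤ 2 * Real.pi * |t| := exp_circle_bound t
  have h2 : |t| ≤ ‖α‖ ^ k * (|y 0| + |y 1|) := mulVec_entry_bound α k y
  calc β⁻¹ * ‖Complex.exp (2 * Real.pi * Complex.I * (t:ℂ)) - 1‖
      ≤ β⁻¹ * (2 * Real.pi * (‖α‖ ^ k * (|y 0| + |y 1|))) := by
        refine mul_le_mul_of_nonneg_left (h1.trans ?_) (by positivity)
        exact mul_le_mul_of_nonneg_left h2 (by positivity)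
    _ = (2 * Real.pi / β) * ((|y 0| + |y 1|) * ‖α‖ ^ k) := by
        field_simp

lemma Sfun_decomp (β : ℝ) (α : ℂ) (y : Fin 2 → ℝ) (n : ℕ) :
    Sfun β α y n = Amat β ^ n +
      ∑ k ∈ Finset.range n, Sfun β α y k * Ffun β α y k * Amat β ^ (n-1-k) := by
  induction n with
  | zero => simp [Sfun_zero]
  | succ n ih =>
    have h1 : Sfun β α y n * Amat β = Amat β ^ (n+1) +
        ∑ k ∈ Finset.range n, Sfun β α y k * Ffun β α y k * Amat β ^ (n-k) := by
      rw [ih, add_mul, ← pow_succ, Finset.sum_mul]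
      congr 1
      refine Finset.sum_congr rfl fun k hk => ?_
      have hkn : k < n := Finset.mem_range.mp hk
      rw [mul_assoc (Sfun β α y k * Ffun β α y k), ← pow_succ,
        show n - 1 - k + 1 = n - k from by omega]
    rw [Sfun_succ, mul_add, h1, Nat.add_sub_cancel, Finset.sum_range_succ,
      Nat.sub_self, pow_zero, mul_one]
    abel

lemma fourier_cont : Continuous fourierMatrix := by
  apply continuous_matrix
  intro i j
  fin_cases i <;> fin_cases j <;> simp [fourierMatrix, Matrix.vecHead, Matrix.vecTail]
  · exact continuous_const
  · exact continuous_const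
  · exact continuous_const
  · exact continuous_const
  · exact continuous_const
  · exact Complex.continuous_exp.comp
      (continuous_const.mul (Complex.continuous_ofReal.comp (continuous_apply 0)))
  · exact continuous_const
  · exact continuous_const
  · exact continuous_const

lemma Ffun_cont (β : ℝ) (α : ℂ) (k : ℕ) : Continuous fun y => Ffun β α y k := by
  apply Continuous.fun_const_smul
  apply Continuous.sub _ continuous_const
  exact fourier_cont.comp (continuous_const.matrix_mulVec continuous_id)

lemma Sfun_cont (β : ℝ) (α : ℂ) (k : ℕ) : Continuous fun y => Sfun β α y k := by
  induction k with
  | zero =>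
    exact continuous_const.congr fun y => (Sfun_zero β α y).symm
  | succ n ih =>
    exact (ih.matrix_mul (continuous_const.add (Ffun_cont β α n))).congr
      fun y => (Sfun_succ β α y n).symm

lemma tendsto_matrix_entrywise {f : ℕ → Matrix (Fin 3) (Fin 3) ℂ}
    {L : Matrix (Fin 3) (Fin 3) ℂ}
    (h : ∀ i j, Filter.Tendsto (fun n => f n i j) Filter.atTop (nhds (L i j))) :
    Filter.Tendsto f Filter.atTop (nhds L) := by
  rw [show (Filter.Tendsto f Filter.atTop (nhds L)) ↔ _ from tendsto_pi_nhds]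
  intro i
  rw [show _ ↔ _ from tendsto_pi_nhds]
  intro j
  exact h i j

end CocycleAux

open CocycleAux Filter in
set_option maxHeartbeats 2000000 in
/-- For every `y ∈ ℝ²`, the rescaled cocycle `β⁻ⁿ 𝖡(y) 𝖡(Ry) ⋯ 𝖡(Rⁿ⁻¹y)` converges;
the limit function `C` is continuous and `C(0) = P`, the rank-one projector
`P i j = v i * u j` with `v = (2 - β², β² - β, β - 1)ᵀ` and
`u = ((3 + β + 7β²)/23)(1, β, β²)`. -/
theorem cocycle_limit (β : ℝ) (hβ : β ^ 3 = β + 1) (hβ1 : 1 < β) (hβ2 : β < 2)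
    (α : ℂ) (hα : α ^ 3 = α + 1) (hαim : 0 < α.im) :
    ∃ C : (Fin 2 → ℝ) → Matrix (Fin 3) (Fin 3) ℂ,
      Continuous C ∧
      (∀ y : Fin 2 → ℝ,
        Filter.Tendsto
          (fun n : ℕ => ((β : ℂ) ^ n)⁻¹ •
            ((List.range n).map
              (fun i => fourierMatrix ((internalMatrix α ^ i).mulVec y))).prod)
          Filter.atTop (nhds (C y))) ∧
      C 0 = Matrix.of (fun i j : Fin 3 =>
        (((![2 - β ^ 2, β ^ 2 - β, β - 1]) i *
          ((3 + β + 7 * β ^ 2) / 23 * (![1, β, β ^ 2]) j) : ℝ) : ℂ)) := by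
  classical
  have hb : (β:ℂ)^3 = (β:ℂ) + 1 := by exact_mod_cast congrArg (Complex.ofReal) hβ
  have hβ0 : (0:ℝ) < β := by linarith
  have hbne : (β:ℂ) ≠ 0 := by exact_mod_cast hβ0.ne'
  have hbα : (β:ℂ) ≠ α := by
    intro h
    have h2 : α.im = 0 := by rw [← h]; simp
    linarith
  have h1 : α^2 + α*(β:ℂ) + (β:ℂ)^2 = 1 := by
    have key : ((β:ℂ) - α) * ((β:ℂ)^2 + (β:ℂ)*α + α^2 - 1) = 0 := by
      linear_combination hb - hα
    rcases mul_eq_zero.mp key with h | h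
    · exact absurd (sub_eq_zero.mp h) hbα
    · linear_combination h
  have hαc : ((starRingEnd ℂ) α)^3 = (starRingEnd ℂ) α + 1 := by
    have h2 := congrArg (starRingEnd ℂ) hα
    simpa [map_pow] using h2
  have hne : α ≠ (starRingEnd ℂ) α := by
    intro h
    have h2 : α.im = -α.im := by
      conv_lhs => rw [h]
      simp
    linarith
  have hbαc : (β:ℂ) ≠ (starRingEnd ℂ) α := by
    intro h
    have h2 := congrArg Complex.im h
    simp at h2
    linarith
  have h1c : ((starRingEnd ℂ) α)^2 + (starRingEnd ℂ) α * (β:ℂ) + (β:ℂ)^2 = 1 := by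
    have key : ((β:ℂ) - (starRingEnd ℂ) α) *
        ((β:ℂ)^2 + (β:ℂ)*(starRingEnd ℂ) α + ((starRingEnd ℂ) α)^2 - 1) = 0 := by
      linear_combination hb - hαc
    rcases mul_eq_zero.mp key with h | h
    · exact absurd (sub_eq_zero.mp h) hbαc
    · linear_combination h
  have hsum : (starRingEnd ℂ) α = -(β:ℂ) - α := by
    have key : (α - (starRingEnd ℂ) α) * (α + (starRingEnd ℂ) α + (β:ℂ)) = 0 := by
      linear_combination h1 - h1c
    rcases mul_eq_zero.mp key with h | h
    · exact absurd (sub_eq_zero.mp h) hne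
    · linear_combination h
  have hc3 : (-(β:ℂ)-α)^3 = (-(β:ℂ)-α) + 1 := by
    linear_combination hb + (-2*(β:ℂ) - α) * h1
  have hprodc : α * (starRingEnd ℂ) α = (β:ℂ)^2 - 1 := by
    rw [hsum]; linear_combination -h1
  have hnsq : Complex.normSq α = β^2 - 1 := by
    have h2 := hprodc
    rw [Complex.mul_conj] at h2
    exact_mod_cast h2
  set ρ : ℝ := ‖α‖ with hρdef
  have hρ0 : 0 ≤ ρ := norm_nonneg α
  have hρsq : ρ^2 = β^2 - 1 := by rw [hρdef, Complex.sq_norm]; exact hnsq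
  have hβsq : β^2 < 2 := by nlinarith
  have hρ1 : ρ < 1 := by nlinarith
  have hρpos : 0 < ρ := by nlinarith
  set r : ℝ := ρ / β with hrdef
  have hr0 : 0 ≤ r := div_nonneg hρ0 hβ0.le
  have hrρ : r ≤ ρ := div_le_self hρ0 hβ1.le
  have hr1 : r < 1 := lt_of_le_of_lt hrρ hρ1
  have habs1 : ‖α / (β:ℂ)‖ = r := by
    rw [norm_div, Complex.norm_real, Real.norm_eq_abs, abs_of_pos hβ0]
  have habs2 : ‖(-(β:ℂ)-α) / (β:ℂ)‖ = r := by
    rw [norm_div, ← hsum, Complex.norm_conj, Complex.norm_real, Real.norm_eq_abs, abs_of_pos hβ0]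
  have hApow : ∀ m : ℕ, Amat β ^ m = Pa (β:ℂ)
      + (α/(β:ℂ))^m • Pa α + ((-(β:ℂ)-α)/(β:ℂ))^m • Pa (-(β:ℂ)-α) := by
    intro m
    rw [Amat, smul_pow, Mpow (β:ℂ) α hb hα hc3 h1, smul_add, smul_add,
      smul_smul, smul_smul, smul_smul]
    have e1 : ((β:ℂ)⁻¹)^m * (β:ℂ)^m = 1 := by
      rw [inv_pow, inv_mul_cancel₀ (pow_ne_zero m hbne)]
    have e2 : ((β:ℂ)⁻¹)^m * α^m = (α/(β:ℂ))^m := by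
      rw [div_pow, inv_pow, div_eq_mul_inv, mul_comm]
    have e3 : ((β:ℂ)⁻¹)^m * (-(β:ℂ)-α)^m = ((-(β:ℂ)-α)/(β:ℂ))^m := by
      rw [div_pow, inv_pow, div_eq_mul_inv, mul_comm]
    rw [e1, e2, e3, one_smul]
  set K₂ : ℝ := N3 (Pa α) + N3 (Pa (-(β:ℂ)-α)) with hK2
  have hK₂0 : 0 ≤ K₂ := add_nonneg (N3_nonneg _) (N3_nonneg _)
  have hAdiff : ∀ m : ℕ, N3 (Amat β ^ m - Pa (β:ℂ)) ≤ K₂ * r^m := by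
    intro m
    have he : Amat β ^ m - Pa (β:ℂ)
        = (α/(β:ℂ))^m • Pa α + ((-(β:ℂ)-α)/(β:ℂ))^m • Pa (-(β:ℂ)-α) := by
      rw [hApow m]; abel
    rw [he]
    refine (N3_add_le _ _).trans ?_
    rw [N3_smul, N3_smul, norm_pow, norm_pow, habs1, habs2, hK2]
    exact le_of_eq (by ring)
  set K : ℝ := N3 (Pa (β:ℂ)) + K₂ with hK
  have hK0 : 0 ≤ K := add_nonneg (N3_nonneg _) hK₂0
  have hAK : ∀ m : ℕ, N3 (Amat β ^ m) ≤ K := by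
    intro m
    calc N3 (Amat β ^ m) = N3 (Pa (β:ℂ) + (Amat β ^ m - Pa (β:ℂ))) := by
          congr 1; abel
      _ ≤ N3 (Pa (β:ℂ)) + N3 (Amat β ^ m - Pa (β:ℂ)) := N3_add_le _ _
      _ ≤ N3 (Pa (β:ℂ)) + K₂ * r^m := by linarith [hAdiff m]
      _ ≤ K := by
          have h2 : r^m ≤ 1 := pow_le_one₀ hr0 hr1.le
          have h3 : K₂ * r^m ≤ K₂ := by nlinarith
          rw [hK]; linarith
  set cst : ℝ := 2*Real.pi/β with hcst
  have hcst0 : 0 ≤ cst := div_nonneg (by positivity) hβ0.le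
  set G : ℝ → ℝ := fun c => K * Real.exp (K * (cst * c) * (1-ρ)⁻¹) with hG
  have hG0 : ∀ c, 0 ≤ G c := fun c => mul_nonneg hK0 (Real.exp_nonneg _)
  have hSbound : ∀ (c : ℝ) (y : Fin 2 → ℝ), |y 0| + |y 1| ≤ c →
      ∀ n, N3 (Sfun β α y n) ≤ G c := by
    intro c y hyc n
    have hc0 : (0:ℝ) ≤ c := le_trans (by positivity) hyc
    set a : ℕ → ℝ := fun k => K * N3 (Ffun β α y k) with hadef
    have ha0 : ∀ k, 0 ≤ a k := fun k => mul_nonneg hK0 (N3_nonneg _)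
    have hrecb : ∀ m, N3 (Sfun β α y m)
        ≤ K + ∑ k ∈ Finset.range m, a k * N3 (Sfun β α y k) := by
      intro m
      calc N3 (Sfun β α y m)
          = N3 (Amat β ^ m + ∑ k ∈ Finset.range m,
              Sfun β α y k * Ffun β α y k * Amat β ^ (m-1-k)) := by
            rw [← Sfun_decomp]
        _ ≤ N3 (Amat β ^ m) + N3 (∑ k ∈ Finset.range m,
              Sfun β α y k * Ffun β α y k * Amat β ^ (m-1-k)) := N3_add_le _ _
        _ ≤ K + ∑ k ∈ Finset.range m,
              N3 (Sfun β α y k * Ffun β α y k * Amat β ^ (m-1-k)) :=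
            add_le_add (hAK m) (N3_sum_le _)
        _ ≤ K + ∑ k ∈ Finset.range m, a k * N3 (Sfun β α y k) := by
            refine add_le_add_right (Finset.sum_le_sum fun k _ => ?_) K
            calc N3 (Sfun β α y k * Ffun β α y k * Amat β ^ (m-1-k))
                ≤ N3 (Sfun β α y k * Ffun β α y k) * N3 (Amat β ^ (m-1-k)) :=
                  N3_mul_le _ _
              _ ≤ N3 (Sfun β α y k * Ffun β α y k) * K :=
                  mul_le_mul_of_nonneg_left (hAK _) (N3_nonneg _)
              _ ≤ (N3 (Sfun β α y k) * N3 (Ffun β α y k)) * K :=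
                  mul_le_mul_of_nonneg_right (N3_mul_le _ _) hK0
              _ = a k * N3 (Sfun β α y k) := by rw [hadef]; ring
    have hgr := gronwall K hK0 a (fun n => N3 (Sfun β α y n)) ha0 hrecb n
    refine hgr.trans ?_
    rw [hG]
    refine mul_le_mul_of_nonneg_left ?_ hK0
    calc ∏ k ∈ Finset.range n, (1 + a k)
        ≤ ∏ k ∈ Finset.range n, Real.exp (a k) := by
          refine Finset.prod_le_prod (fun k _ => by linarith [ha0 k]) (fun k _ => ?_)
          rw [add_comm]; exact Real.add_one_le_exp (a k)
      _ = Real.exp (∑ k ∈ Finset.range n, a k) := by rw [Real.exp_sum]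
      _ ≤ Real.exp (K * (cst * c) * (1-ρ)⁻¹) := by
          refine Real.exp_le_exp.mpr ?_
          calc ∑ k ∈ Finset.range n, a k
              ≤ ∑ k ∈ Finset.range n, (K * (cst * c)) * ρ^k := by
                refine Finset.sum_le_sum fun k _ => ?_
                rw [hadef]
                calc K * N3 (Ffun β α y k)
                    ≤ K * (cst * ((|y 0| + |y 1|) * ρ^k)) :=
                      mul_le_mul_of_nonneg_left (Ffun_bound β hβ0 α y k) hK0
                  _ ≤ (K * (cst * c)) * ρ^k := by
                      have h4 := mul_le_mul_of_nonneg_right hyc (pow_nonneg hρ0 k)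
                      nlinarith [mul_le_mul_of_nonneg_left h4 (mul_nonneg hK0 hcst0)]
            _ = (K * (cst * c)) * ∑ k ∈ Finset.range n, ρ^k := by
                rw [← Finset.mul_sum]
            _ ≤ (K * (cst * c)) * (1-ρ)⁻¹ := by
                refine mul_le_mul_of_nonneg_left ?_ (by positivity)
                have hgs := sum_le_hasSum (Finset.range n)
                  (fun i _ => pow_nonneg hρ0 i) (hasSum_geometric_of_lt_one hρ0 hρ1)
                simpa using hgs
  have hTb : ∀ (c : ℝ) (y : Fin 2 → ℝ), |y 0| + |y 1| ≤ c → ∀ k : ℕ,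
      N3 (Tterm β α y k) ≤ (G c * (cst * c) * N3 (Pa (β:ℂ))) * ρ^k := by
    intro c y hyc k
    have hc0 : (0:ℝ) ≤ c := le_trans (by positivity) hyc
    calc N3 (Tterm β α y k)
        ≤ N3 (Sfun β α y k * Ffun β α y k) * N3 (Pa (β:ℂ)) := N3_mul_le _ _
      _ ≤ (N3 (Sfun β α y k) * N3 (Ffun β α y k)) * N3 (Pa (β:ℂ)) :=
          mul_le_mul_of_nonneg_right (N3_mul_le _ _) (N3_nonneg _)
      _ ≤ (G c * (cst * (c * ρ^k))) * N3 (Pa (β:ℂ)) := by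
          refine mul_le_mul_of_nonneg_right ?_ (N3_nonneg _)
          refine mul_le_mul (hSbound c y hyc k) ?_ (N3_nonneg _) (hG0 c)
          refine (Ffun_bound β hβ0 α y k).trans ?_
          have h4 := mul_le_mul_of_nonneg_right hyc (pow_nonneg hρ0 k)
          nlinarith [mul_le_mul_of_nonneg_left h4 hcst0]
      _ = (G c * (cst * c) * N3 (Pa (β:ℂ))) * ρ^k := by ring
  have hu_summ : ∀ c : ℝ,
      Summable (fun k : ℕ => (G c * (cst * c) * N3 (Pa (β:ℂ))) * ρ^k) :=
    fun c => (summable_geometric_of_lt_one hρ0 hρ1).mul_left _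
  have hTsumm : ∀ (y : Fin 2 → ℝ) (i j : Fin 3),
      Summable (fun k => (Tterm β α y k) i j) := by
    intro y i j
    refine Summable.of_norm_bounded (hu_summ (|y 0| + |y 1|)) (fun k => ?_)
    exact (abs_le_N3 _ i j).trans (hTb _ y le_rfl k)
  refine ⟨fun y => Pa (β:ℂ) + Matrix.of (fun i j => ∑' k, (Tterm β α y k) i j),
    ?_, ?_, ?_⟩
  · -- continuity
    refine continuous_const.add (continuous_matrix fun i j => ?_)
    simp only [Matrix.of_apply]
    rw [continuous_iff_continuousAt]
    intro y₀
    set R : ℝ := |y₀ 0| + |y₀ 1| + 1 with hR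
    have hRopen : IsOpen {y : Fin 2 → ℝ | |y 0| + |y 1| < R} :=
      isOpen_lt (((continuous_apply (0:Fin 2)).abs).add
        ((continuous_apply (1:Fin 2)).abs)) continuous_const
    have hmem : y₀ ∈ {y : Fin 2 → ℝ | |y 0| + |y 1| < R} := by
      simp only [Set.mem_setOf_eq, hR]; linarith
    refine ContinuousOn.continuousAt ?_ (hRopen.mem_nhds hmem)
    refine continuousOn_tsum (fun k => ?_) (hu_summ R) (fun k y hy => ?_)
    · exact ((((Sfun_cont β α k).matrix_mul (Ffun_cont β α k)).matrix_mul
        continuous_const).matrix_elem i j).continuousOn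
    · exact (abs_le_N3 _ i j).trans (hTb R y (le_of_lt hy) k)
  · -- convergence
    intro y
    set c : ℝ := |y 0| + |y 1| with hc
    have h1t : Tendsto (fun n => Amat β ^ n) atTop (nhds (Pa (β:ℂ))) := by
      refine tendsto_of_N3 (g := fun n => K₂ * r^n) hAdiff ?_
      simpa using (tendsto_pow_atTop_nhds_zero_of_lt_one hr0 hr1).const_mul K₂
    have h2t : Tendsto (fun n => ∑ k ∈ Finset.range n, Tterm β α y k) atTop
        (nhds (Matrix.of (fun i j => ∑' k, (Tterm β α y k) i j))) := by
      apply tendsto_matrix_entrywise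
      intro i j
      have h5 := (hTsumm y i j).hasSum.tendsto_sum_nat
      simp only [Matrix.of_apply]
      refine h5.congr fun n => ?_
      rw [Matrix.sum_apply]
    have h3t : Tendsto (fun n => ∑ k ∈ Finset.range n,
        Sfun β α y k * Ffun β α y k * (Amat β ^ (n-1-k) - Pa (β:ℂ)))
        atTop (nhds 0) := by
      set D : ℝ := G c * (cst * c) * K₂ with hD
      have hD0 : 0 ≤ D := mul_nonneg (mul_nonneg (hG0 c)
        (mul_nonneg hcst0 (by positivity))) hK₂0
      refine tendsto_of_N3 (g := fun n => D * (n * ρ^(n-1))) (fun n => ?_) ?_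
      · rw [sub_zero]
        calc N3 (∑ k ∈ Finset.range n,
              Sfun β α y k * Ffun β α y k * (Amat β ^ (n-1-k) - Pa (β:ℂ)))
            ≤ ∑ k ∈ Finset.range n,
              N3 (Sfun β α y k * Ffun β α y k * (Amat β ^ (n-1-k) - Pa (β:ℂ))) :=
              N3_sum_le _
          _ ≤ ∑ k ∈ Finset.range n, D * ρ^(n-1) := by
              refine Finset.sum_le_sum fun k hk => ?_
              have hkn : k < n := Finset.mem_range.mp hk
              have hsplitpow : ρ^k * ρ^(n-1-k) = ρ^(n-1) := by
                rw [← pow_add, show k + (n-1-k) = n-1 from by omega]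
              calc N3 (Sfun β α y k * Ffun β α y k * (Amat β ^ (n-1-k) - Pa (β:ℂ)))
                  ≤ N3 (Sfun β α y k * Ffun β α y k) *
                    N3 (Amat β ^ (n-1-k) - Pa (β:ℂ)) := N3_mul_le _ _
                _ ≤ (N3 (Sfun β α y k) * N3 (Ffun β α y k)) * (K₂ * r^(n-1-k)) := by
                    refine mul_le_mul (N3_mul_le _ _) (hAdiff _) (N3_nonneg _) ?_
                    exact mul_nonneg (N3_nonneg _) (N3_nonneg _)
                _ ≤ (G c * (cst * (c * ρ^k))) * (K₂ * ρ^(n-1-k)) := by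
                    refine mul_le_mul ?_ ?_ (mul_nonneg hK₂0 (pow_nonneg hr0 _)) ?_
                    · refine mul_le_mul (hSbound c y le_rfl k)
                        ((Ffun_bound β hβ0 α y k).trans (le_of_eq (by rw [hc])))
                        (N3_nonneg _) (hG0 c)
                    · exact mul_le_mul_of_nonneg_left
                        (pow_le_pow_left₀ hr0 hrρ _) hK₂0
                    · have : (0:ℝ) ≤ c := by rw [hc]; positivity
                      positivity
                _ = D * (ρ^k * ρ^(n-1-k)) := by rw [hD]; ring
                _ = D * ρ^(n-1) := by rw [hsplitpow]
          _ = n * (D * ρ^(n-1)) := by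
              rw [Finset.sum_const, Finset.card_range, nsmul_eq_mul]
          _ = D * (n * ρ^(n-1)) := by ring
      · have hbase : Tendsto (fun n : ℕ => (n:ℝ) * ρ^n) atTop (nhds 0) := by
          have hs := summable_pow_mul_geometric_of_norm_lt_one 1
            (r := ρ) (by rwa [Real.norm_eq_abs, abs_of_nonneg hρ0])
          have := hs.tendsto_atTop_zero
          simpa [pow_one] using this
        have h5 : Tendsto (fun m : ℕ => ((m:ℝ)+1) * ρ^m) atTop (nhds 0) := by
          have h6 := hbase.add (tendsto_pow_atTop_nhds_zero_of_lt_one hρ0 hρ1)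
          simpa [add_mul] using h6
        have h6 : Tendsto (fun n : ℕ => (n:ℝ) * ρ^(n-1)) atTop (nhds 0) := by
          have hcomp := h5.comp (tendsto_sub_atTop_nat 1)
          refine hcomp.congr' ?_
          filter_upwards [Filter.eventually_ge_atTop 1] with n hn
          simp only [Function.comp_apply]
          congr 1
          push_cast [Nat.cast_sub hn]
          ring
        simpa using h6.const_mul D
    have hsplit : ∀ n, Sfun β α y n = Amat β ^ n
        + (∑ k ∈ Finset.range n, Tterm β α y k)
        + (∑ k ∈ Finset.range n,
            Sfun β α y k * Ffun β α y k * (Amat β ^ (n-1-k) - Pa (β:ℂ))) := by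
      intro n
      rw [Sfun_decomp β α y n, add_assoc, ← Finset.sum_add_distrib]
      congr 1
      refine Finset.sum_congr rfl fun k _ => ?_
      rw [Tterm, mul_sub]
      abel
    have hfinal := (h1t.add h2t).add h3t
    rw [add_zero] at hfinal
    have hres : Tendsto (fun n => Sfun β α y n) atTop
        (nhds (Pa (β:ℂ) + Matrix.of (fun i j => ∑' k, (Tterm β α y k) i j))) := by
      refine hfinal.congr fun n => ?_
      exact (hsplit n).symm
    exact hres
  · -- value at zero
    have hF0 : ∀ k, Ffun β α 0 k = 0 := by
      intro k
      rw [Ffun, Matrix.mulVec_zero, fourier_zero_eq, sub_self, smul_zero]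
    have hT0 : ∀ k, Tterm β α 0 k = (0 : Matrix (Fin 3) (Fin 3) ℂ) := by
      intro k; rw [Tterm, hF0, mul_zero, zero_mul]
    have hPb : Pa (β:ℂ) = Matrix.of (fun i j : Fin 3 =>
        (((![2 - β ^ 2, β ^ 2 - β, β - 1]) i *
          ((3 + β + 7 * β ^ 2) / 23 * (![1, β, β ^ 2]) j) : ℝ) : ℂ)) := by
      ext i j
      fin_cases i <;> fin_cases j <;> simp [Pa] <;> push_cast <;> ring
    have hzero : (Matrix.of (fun i j : Fin 3 => ∑' k, (Tterm β α 0 k) i j))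
        = (0 : Matrix (Fin 3) (Fin 3) ℂ) := by
      ext i j
      simp [hT0]
    show Pa (β:ℂ) + Matrix.of (fun i j : Fin 3 => ∑' k, (Tterm β α 0 k) i j) = _
    rw [hzero, add_zero, hPb]
end
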